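/- For a finite simplicial graph Γ and any field k, the second cohomology H^2(A(Γ); k) of the right-angled Artin group A(Γ) with trivial coefficients is generated by cup products of elements of H^1(A(Γ); k), and the classes f_v ⌣ f_w for edges {v,w} of Γ form a basis of H^2(A(Γ); k). -/

import Mathlib

open scoped commutatorElement

/-- The defining relations of the right-angled Artin group on a graph `Γ`:
commutators of generators spanning an edge. -/
def raagRels {V : Type*} (Γ : SimpleGraph V) : Set (FreeGroup V) :=
  {r | ∃ v w : V, Γ.Adj v w ∧ r = ⁅FreeGroup.of v, FreeGroup.of w⁆}

/-- The right-angled Artin group `A(Γ)` of a graph `Γ`. -/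
def RAAG {V : Type*} (Γ : SimpleGraph V) : Type _ := PresentedGroup (raagRels Γ)

instance {V : Type*} (Γ : SimpleGraph V) : Group (RAAG Γ) :=
  QuotientGroup.Quotient.group _

/-- The generator of `A(Γ)` corresponding to a vertex. -/
def RAAG.gen {V : Type*} (Γ : SimpleGraph V) (v : V) : RAAG Γ :=
  PresentedGroup.of (rels := raagRels Γ) v

/-- The defining relations of the right-angled Coxeter group on a graph `Γ`:
edge commutators together with the squares of all generators. -/
def racgRels {V : Type*} (Γ : SimpleGraph V) : Set (FreeGroup V) :=
  raagRels Γ ∪ {r | ∃ v : V, r = (FreeGroup.of v) ^ 2}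

/-- The right-angled Coxeter group `C(Γ)` of a graph `Γ`. -/
def RACG {V : Type*} (Γ : SimpleGraph V) : Type _ := PresentedGroup (racgRels Γ)

instance {V : Type*} (Γ : SimpleGraph V) : Group (RACG Γ) :=
  QuotientGroup.Quotient.group _

/-- The generator of `C(Γ)` corresponding to a vertex. -/
def RACG.gen {V : Type*} (Γ : SimpleGraph V) (v : V) : RACG Γ :=
  PresentedGroup.of (rels := racgRels Γ) v
section GroupCohomologyLowDim

variable (k : Type*) [CommRing k] (G : Type*) [Group G]

/-- `H¹(G; k)` with trivial coefficients: additive homomorphisms `G → k`,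
as a `k`-module. -/
def H1 : Submodule k (G → k) where
  carrier := {f | ∀ x y : G, f (x * y) = f x + f y}
  add_mem' := by
    intro f g hf hg x y
    simp only [Pi.add_apply, hf x y, hg x y]; ring
  zero_mem' := by intro x y; simp
  smul_mem' := by
    intro a f hf x y
    simp only [Pi.smul_apply, smul_eq_mul, hf x y]; ring

variable {k G} in
/-- The (inhomogeneous) 2-cocycle condition for trivial coefficients. -/
def IsTwoCocycle (c : G → G → k) : Prop :=
  ∀ x y z : G, c y z - c (x * y) z + c x (y * z) - c x y = 0

variable {k G} in
/-- The (inhomogeneous) 2-coboundary condition for trivial coefficients. -/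
def IsTwoCoboundary (c : G → G → k) : Prop :=
  ∃ f : G → k, ∀ x y : G, c x y = f x - f (x * y) + f y

/-- The `k`-module of 2-cocycles on `G` with trivial coefficients. -/
def twoCocycles : Submodule k (G → G → k) where
  carrier := {c | IsTwoCocycle c}
  add_mem' := by
    intro c d hc hd x y z
    have h1 := hc x y z
    have h2 := hd x y z
    simp only [Pi.add_apply]
    linear_combination h1 + h2
  zero_mem' := by intro x y z; simp
  smul_mem' := by
    intro a c hc x y z
    have h1 := hc x y z
    simp only [Pi.smul_apply, smul_eq_mul]
    linear_combination a * h1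

/-- The 2-coboundaries, as a submodule of the 2-cocycles. -/
def twoCoboundariesIn : Submodule k (twoCocycles k G) where
  carrier := {c | IsTwoCoboundary (c : G → G → k)}
  add_mem' := by
    rintro c d ⟨f, hf⟩ ⟨g, hg⟩
    exact ⟨f + g, fun x y => by
      simp only [Submodule.coe_add, Pi.add_apply, hf x y, hg x y]; ring⟩
  zero_mem' := ⟨0, fun x y => by simp⟩
  smul_mem' := by
    rintro a c ⟨f, hf⟩
    exact ⟨a • f, fun x y => by
      simp only [SetLike.val_smul, Pi.smul_apply, smul_eq_mul, hf x y]; ring⟩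

/-- `H²(G; k)` with trivial coefficients: 2-cocycles modulo 2-coboundaries. -/
def H2 : Type _ := twoCocycles k G ⧸ twoCoboundariesIn k G

noncomputable instance : AddCommGroup (H2 k G) := by
  unfold H2; infer_instance

noncomputable instance : Module k (H2 k G) := by
  unfold H2; infer_instance

variable {k G} in
/-- The 2-cocycle `(x, y) ↦ f x * g y` given by two 1-cocycles. -/
def cupCocycle (f g : H1 k G) : twoCocycles k G :=
  ⟨fun x y => f.1 x * g.1 y, by
    intro x y z
    have hf := f.2 x y
    have hg := g.2 y z
    simp only [Set.mem_setOf_eq] at hf hg ⊢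
    linear_combination (f.1 x : k) * hg - (g.1 z : k) * hf⟩

/-- The cup product `H¹(G;k) × H¹(G;k) → H²(G;k)` as a `k`-bilinear map. -/
noncomputable def cup : H1 k G →ₗ[k] H1 k G →ₗ[k] H2 k G :=
  LinearMap.mk₂ k (fun f g => Submodule.Quotient.mk (cupCocycle f g))
    (by
      intro f f' g
      have h : cupCocycle (f + f') g = cupCocycle f g + cupCocycle f' g := by
        apply Subtype.ext; funext x y; simp [cupCocycle]; ring
      show Submodule.Quotient.mk (cupCocycle (f + f') g) = _
      rw [h, Submodule.Quotient.mk_add]; rfl)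
    (by
      intro a f g
      have h : cupCocycle (a • f) g = a • cupCocycle f g := by
        apply Subtype.ext; funext x y; simp [cupCocycle]; ring
      show Submodule.Quotient.mk (cupCocycle (a • f) g) = _
      rw [h, Submodule.Quotient.mk_smul]; rfl)
    (by
      intro f g g'
      have h : cupCocycle f (g + g') = cupCocycle f g + cupCocycle f g' := by
        apply Subtype.ext; funext x y; simp [cupCocycle]; ring
      show Submodule.Quotient.mk (cupCocycle f (g + g')) = _
      rw [h, Submodule.Quotient.mk_add]; rfl)
    (by
      intro a f g
      have h : cupCocycle f (a • g) = a • cupCocycle f g := by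
        apply Subtype.ext; funext x y; simp [cupCocycle]; ring
      show Submodule.Quotient.mk (cupCocycle f (a • g)) = _
      rw [h, Submodule.Quotient.mk_smul]; rfl)

variable {k G}

variable {G' : Type*} [Group G']

/-- The map on `H¹` induced by a group homomorphism. -/
def H1map (φ : G →* G') : H1 k G' →ₗ[k] H1 k G where
  toFun f := ⟨f.1 ∘ φ, by intro x y; simp only [Function.comp_apply, map_mul]; exact f.2 _ _⟩
  map_add' f g := rfl
  map_smul' a f := rfl

/-- The pull-back of 2-cocycles along a group homomorphism. -/
def twoCocyclesMap (φ : G →* G') : twoCocycles k G' →ₗ[k] twoCocycles k G where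
  toFun c := ⟨fun x y => c.1 (φ x) (φ y), by
    intro x y z
    have := c.2 (φ x) (φ y) (φ z)
    simp only [map_mul] at *
    exact this⟩
  map_add' c d := rfl
  map_smul' a c := rfl

/-- The map on `H²` induced by a group homomorphism. -/
noncomputable def H2map (φ : G →* G') : H2 k G' →ₗ[k] H2 k G :=
  Submodule.mapQ (twoCoboundariesIn k G') (twoCoboundariesIn k G) (twoCocyclesMap φ)
    (by
      rintro c ⟨f, hf⟩
      exact ⟨f ∘ φ, fun x y => by
        simp only [Function.comp_apply, map_mul, twoCocyclesMap, LinearMap.coe_mk,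
          AddHom.coe_mk]
        exact hf _ _⟩)

end GroupCohomologyLowDim
section DualClassesAndProjection

variable {V : Type*} [DecidableEq V] (Γ : SimpleGraph V) (k : Type*) [CommRing k]

/-- The homomorphism `A(Γ) → k` (written multiplicatively) dual to a vertex `v`,
sending `v ↦ 1` and all other generators to `0`. -/
def RAAG.dualHom (v : V) : RAAG Γ →* Multiplicative k :=
  PresentedGroup.toGroup
    (f := fun w => Multiplicative.ofAdd (if w = v then (1 : k) else 0))
    (by
      rintro r ⟨a, b, hab, rfl⟩
      rw [map_commutatorElement]
      exact commutatorElement_eq_one_iff_commute.mpr (mul_comm _ _))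

/-- The cohomology class `f_v ∈ H¹(A(Γ); k)` dual to the vertex `v`. -/
def RAAG.dual (v : V) : H1 k (RAAG Γ) :=
  ⟨fun g => Multiplicative.toAdd (RAAG.dualHom Γ k v g), by
    intro x y
    simp [map_mul]⟩

/-- The canonical surjection `A(Γ) → C(Γ)`. -/
def raagToRacg : RAAG Γ →* RACG Γ :=
  PresentedGroup.toGroup (f := fun v => RACG.gen Γ v) (by
    intro r hr
    have h : FreeGroup.lift (fun v => RACG.gen Γ v) = PresentedGroup.mk (racgRels Γ) := by
      apply FreeGroup.ext_hom
      intro a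
      simp only [FreeGroup.lift_apply_of]
      rfl
    rw [h]
    have hmem : r ∈ Subgroup.normalClosure (racgRels Γ) :=
      Subgroup.subset_normalClosure (Set.mem_union_left _ hr)
    exact (QuotientGroup.eq_one_iff r).mpr hmem)

end DualClassesAndProjection

section SplittingAux

variable {k : Type*} [CommRing k] {G : Type*} [Group G]

lemma cocycle_one_left (c : twoCocycles k G) (z : G) : c.1 1 z = c.1 1 1 := by
  have h := c.2 1 1 z
  simp only [one_mul] at h
  linear_combination h

lemma cocycle_one_right (c : twoCocycles k G) (x : G) : c.1 x 1 = c.1 1 1 := by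
  have h := c.2 x 1 1
  simp only [mul_one, one_mul] at h
  linear_combination -h

lemma cocycle_inv (c : twoCocycles k G) (x : G) : c.1 x⁻¹ x = c.1 x x⁻¹ := by
  have h := c.2 x x⁻¹ x
  simp only [mul_inv_cancel, inv_mul_cancel] at h
  linear_combination h + cocycle_one_left c x - cocycle_one_right c x

/-- The central extension of `G` by `k` determined by a 2-cocycle. -/
@[ext]
structure CExt (c : twoCocycles k G) where
  a : k
  g : G

namespace CExt

variable {c : twoCocycles k G}

instance : Mul (CExt c) := ⟨fun p q => ⟨p.a + q.a + c.1 p.g q.g, p.g * q.g⟩⟩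
instance : One (CExt c) := ⟨⟨-c.1 1 1, 1⟩⟩
instance : Inv (CExt c) := ⟨fun p => ⟨-c.1 1 1 - p.a - c.1 p.g p.g⁻¹, p.g⁻¹⟩⟩

@[simp] lemma mul_a (p q : CExt c) : (p * q).a = p.a + q.a + c.1 p.g q.g := rfl
@[simp] lemma mul_g (p q : CExt c) : (p * q).g = p.g * q.g := rfl
@[simp] lemma one_a : (1 : CExt c).a = -c.1 1 1 := rfl
@[simp] lemma one_g : (1 : CExt c).g = 1 := rfl
@[simp] lemma inv_a (p : CExt c) : (p⁻¹).a = -c.1 1 1 - p.a - c.1 p.g p.g⁻¹ := rfl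
@[simp] lemma inv_g (p : CExt c) : (p⁻¹).g = p.g⁻¹ := rfl

instance : Group (CExt c) where
  mul_assoc p q r := by
    ext
    · simp only [mul_a, mul_g]
      linear_combination -c.2 p.g q.g r.g
    · simp [mul_assoc]
  one_mul p := by
    ext
    · simp only [mul_a, one_a, one_g, cocycle_one_left]
      ring
    · simp
  mul_one p := by
    ext
    · simp only [mul_a, one_a, one_g, cocycle_one_right]
      ring
    · simp
  inv_mul_cancel p := by
    ext
    · simp only [mul_a, inv_a, inv_g, one_a, cocycle_inv]
      ring
    · simp

/-- The projection of the central extension to `G`. -/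
def proj : CExt c →* G where
  toFun p := p.g
  map_one' := rfl
  map_mul' _ _ := rfl

@[simp] lemma proj_apply (p : CExt c) : (proj p : G) = p.g := rfl

end CExt

end SplittingAux

section RAAGAux

variable {V : Type*} [DecidableEq V] (Γ : SimpleGraph V)

lemma RAAG.gen_comm {v w : V} (h : Γ.Adj v w) :
    RAAG.gen Γ v * RAAG.gen Γ w = RAAG.gen Γ w * RAAG.gen Γ v := by
  have hmem : (⁅FreeGroup.of v, FreeGroup.of w⁆ : FreeGroup V) ∈
      Subgroup.normalClosure (raagRels Γ) :=
    Subgroup.subset_normalClosure ⟨v, w, h, rfl⟩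
  have h1 : (PresentedGroup.mk (raagRels Γ)) ⁅FreeGroup.of v, FreeGroup.of w⁆ = 1 :=
    (QuotientGroup.eq_one_iff _).mpr hmem
  rw [map_commutatorElement] at h1
  exact commutatorElement_eq_one_iff_commute.mp h1

variable (k : Type*) [CommRing k]

lemma RAAG.dual_gen (v w : V) :
    (RAAG.dual Γ k v).1 (RAAG.gen Γ w) = if w = v then 1 else 0 := by
  have h : RAAG.dualHom Γ k v (RAAG.gen Γ w)
      = Multiplicative.ofAdd (if w = v then (1 : k) else 0) :=
    PresentedGroup.toGroup.of _
  show Multiplicative.toAdd (RAAG.dualHom Γ k v (RAAG.gen Γ w)) = _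
  rw [h]
  rfl

/-- Key splitting lemma: a 2-cocycle on `A(Γ)` which is symmetric on adjacent pairs of
generators is a coboundary. -/
lemma isTwoCoboundary_of_symm (c : twoCocycles k (RAAG Γ))
    (hsymm : ∀ v w : V, Γ.Adj v w →
      c.1 (RAAG.gen Γ v) (RAAG.gen Γ w) = c.1 (RAAG.gen Γ w) (RAAG.gen Γ v)) :
    IsTwoCoboundary c.1 := by
  have hrel : ∀ r ∈ raagRels Γ,
      FreeGroup.lift (fun v => (⟨0, RAAG.gen Γ v⟩ : CExt c)) r = 1 := by
    rintro r ⟨v, w, hvw, rfl⟩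
    rw [map_commutatorElement]
    simp only [FreeGroup.lift_apply_of]
    have hc : ((⟨0, RAAG.gen Γ v⟩ : CExt c) * ⟨0, RAAG.gen Γ w⟩) =
        (⟨0, RAAG.gen Γ w⟩ : CExt c) * ⟨0, RAAG.gen Γ v⟩ := by
      ext
      · simpa using hsymm v w hvw
      · simpa using RAAG.gen_comm Γ hvw
    exact commutatorElement_eq_one_iff_commute.mpr hc
  have h2 : ∀ r ∈ raagRels Γ, FreeGroup.lift (fun v => RAAG.gen Γ v) r = 1 := by
    rintro r ⟨v, w, hvw, rfl⟩
    rw [map_commutatorElement]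
    simp only [FreeGroup.lift_apply_of]
    exact commutatorElement_eq_one_iff_commute.mpr (RAAG.gen_comm Γ hvw)
  have hproj : ∀ x : RAAG Γ, (PresentedGroup.toGroup hrel x).g = x := by
    intro x
    have e1 : (CExt.proj.comp (PresentedGroup.toGroup hrel)) x =
        PresentedGroup.toGroup h2 x :=
      PresentedGroup.toGroup.unique h2 (CExt.proj.comp (PresentedGroup.toGroup hrel))
        (fun v => by
          simp only [MonoidHom.comp_apply]
          rw [show (PresentedGroup.of v : RAAG Γ) = RAAG.gen Γ v from rfl]
          rw [RAAG.gen, PresentedGroup.toGroup.of]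
          rfl)
    have e2 : (MonoidHom.id (RAAG Γ)) x = PresentedGroup.toGroup h2 x :=
      PresentedGroup.toGroup.unique h2 (MonoidHom.id _) (fun v => rfl)
    exact e1.trans e2.symm
  refine ⟨fun x => -(PresentedGroup.toGroup hrel x).a, fun x y => ?_⟩
  have hm : (PresentedGroup.toGroup hrel (x * y)) =
      PresentedGroup.toGroup hrel x * PresentedGroup.toGroup hrel y := map_mul _ _ _
  have h3 := congrArg CExt.a hm
  rw [CExt.mul_a, hproj x, hproj y] at h3
  linear_combination (-1 : k) * h3

end RAAGAux

/-- For a finite graph `Γ` and any field `k`, `H²(A(Γ); k)` is generated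
by cup products of elements of `H¹(A(Γ); k)`: indeed the classes `f_v ⌣ f_w` for edges
`{v, w}` of `Γ` form a basis (a linearly independent spanning family indexed by the
edge set). -/
theorem H2_raag_basis_of_edge_cups {V : Type} [Fintype V] [DecidableEq V]
    (Γ : SimpleGraph V) (k : Type) [Field k] :
    ∃ F : Γ.edgeSet → H2 k (RAAG Γ),
      (∀ e : Γ.edgeSet, ∃ v w : V, Γ.Adj v w ∧ (e : Sym2 V) = s(v, w) ∧
        F e = cup k (RAAG Γ) (RAAG.dual Γ k v) (RAAG.dual Γ k w)) ∧
      LinearIndependent k F ∧ Submodule.span k (Set.range F) = ⊤ := by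
  classical
  haveI : Fintype ↑Γ.edgeSet := (Set.toFinite _).fintype
  have hex : ∀ e : Γ.edgeSet, ∃ q : V × V, Γ.Adj q.1 q.2 ∧ (e : Sym2 V) = s(q.1, q.2) := by
    rintro ⟨e, he⟩
    induction e using Sym2.ind with
    | _ v w => exact ⟨(v, w), he, rfl⟩
  choose p hadj hrep using hex
  have hcomm : ∀ e : Γ.edgeSet,
      RAAG.gen Γ (p e).1 * RAAG.gen Γ (p e).2 = RAAG.gen Γ (p e).2 * RAAG.gen Γ (p e).1 :=
    fun e => RAAG.gen_comm Γ (hadj e)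
  let ev : Γ.edgeSet → (twoCocycles k (RAAG Γ) →ₗ[k] k) := fun e =>
    { toFun := fun c => c.1 (RAAG.gen Γ (p e).1) (RAAG.gen Γ (p e).2)
        - c.1 (RAAG.gen Γ (p e).2) (RAAG.gen Γ (p e).1)
      map_add' := fun c d => by
        simp only [Submodule.coe_add, Pi.add_apply]; ring
      map_smul' := fun r c => by
        simp only [SetLike.val_smul, Pi.smul_apply, smul_eq_mul, RingHom.id_apply]; ring }
  have hev : ∀ (e : Γ.edgeSet) (c : twoCocycles k (RAAG Γ)),
      ev e c = c.1 (RAAG.gen Γ (p e).1) (RAAG.gen Γ (p e).2)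
        - c.1 (RAAG.gen Γ (p e).2) (RAAG.gen Γ (p e).1) := fun _ _ => rfl
  have hker : ∀ e : Γ.edgeSet, twoCoboundariesIn k (RAAG Γ) ≤ LinearMap.ker (ev e) := by
    rintro e c hc
    have hc' : IsTwoCoboundary (c : RAAG Γ → RAAG Γ → k) := hc
    obtain ⟨f, hf⟩ := hc'
    rw [LinearMap.mem_ker, hev, hf, hf, hcomm e]
    ring
  let Φ : Γ.edgeSet → (H2 k (RAAG Γ) →ₗ[k] k) := fun e =>
    Submodule.liftQ _ (ev e) (hker e)
  have hΦ : ∀ (e : Γ.edgeSet) (c : twoCocycles k (RAAG Γ)),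
      Φ e (Submodule.Quotient.mk c) = ev e c := fun e c => rfl
  have hcup : ∀ f g : H1 k (RAAG Γ),
      cup k (RAAG Γ) f g = Submodule.Quotient.mk (cupCocycle f g) := fun f g => rfl
  have hvalue : ∀ e e' : Γ.edgeSet,
      ev e (cupCocycle (RAAG.dual Γ k (p e').1) (RAAG.dual Γ k (p e').2)) =
        if e' = e then 1 else 0 := by
    intro e e'
    rw [hev]
    show (RAAG.dual Γ k (p e').1).1 (RAAG.gen Γ (p e).1)
          * (RAAG.dual Γ k (p e').2).1 (RAAG.gen Γ (p e).2)
        - (RAAG.dual Γ k (p e').1).1 (RAAG.gen Γ (p e).2)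
          * (RAAG.dual Γ k (p e').2).1 (RAAG.gen Γ (p e).1) = _
    rw [RAAG.dual_gen, RAAG.dual_gen, RAAG.dual_gen, RAAG.dual_gen]
    by_cases h : e' = e
    · subst h
      have hne : (p e').1 ≠ (p e').2 := (hadj e').ne
      simp [hne, Ne.symm hne]
    · have hsym : s((p e).1, (p e).2) ≠ s((p e').1, (p e').2) := by
        rw [← hrep e, ← hrep e']
        intro hh
        exact h (Subtype.ext hh.symm)
      have h1 : ¬((p e).1 = (p e').1 ∧ (p e).2 = (p e').2) := by
        rintro ⟨ha, hb⟩
        exact hsym (by rw [ha, hb])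
      have h2 : ¬((p e).2 = (p e').1 ∧ (p e).1 = (p e').2) := by
        rintro ⟨ha, hb⟩
        refine hsym ?_
        rw [ha, hb]
        exact Sym2.eq_swap
      rw [if_neg h]
      rcases not_and_or.mp h1 with hh | hh <;> rcases not_and_or.mp h2 with hh' | hh' <;>
        simp [hh, hh']
  refine ⟨fun e => cup k (RAAG Γ) (RAAG.dual Γ k (p e).1) (RAAG.dual Γ k (p e).2),
    fun e => ⟨(p e).1, (p e).2, hadj e, hrep e, rfl⟩, ?_, ?_⟩
  · rw [linearIndependent_iff']
    intro s g hsum i hi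
    have h0 := congrArg (fun z => Φ i z) hsum
    simp only [map_sum, map_zero] at h0
    have hterm : ∀ j ∈ s,
        Φ i (g j • cup k (RAAG Γ) (RAAG.dual Γ k (p j).1) (RAAG.dual Γ k (p j).2))
          = if j = i then g j else 0 := by
      intro j _
      rw [map_smul, hcup, hΦ, hvalue]
      by_cases h : j = i <;> simp [h]
    rw [Finset.sum_congr rfl hterm, Finset.sum_ite_eq' s i g] at h0
    rwa [if_pos hi] at h0
  · rw [eq_top_iff]
    rintro x -
    obtain ⟨c, rfl⟩ := Submodule.Quotient.mk_surjective (twoCoboundariesIn k (RAAG Γ)) x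
    have hval2 : ∀ (x y : RAAG Γ),
        ((c - ∑ e : Γ.edgeSet, ev e c •
            cupCocycle (RAAG.dual Γ k (p e).1) (RAAG.dual Γ k (p e).2) :
          twoCocycles k (RAAG Γ)) : RAAG Γ → RAAG Γ → k) x y
          = c.1 x y - ∑ e : Γ.edgeSet,
              ev e c * ((RAAG.dual Γ k (p e).1).1 x * (RAAG.dual Γ k (p e).2).1 y) := by
      intro x y
      simp [Submodule.coe_sub, Pi.sub_apply, AddSubmonoidClass.coe_finset_sum,
        Finset.sum_apply, SetLike.val_smul, Pi.smul_apply, smul_eq_mul, cupCocycle]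
    have key : (c - ∑ e : Γ.edgeSet, ev e c •
          cupCocycle (RAAG.dual Γ k (p e).1) (RAAG.dual Γ k (p e).2))
        ∈ twoCoboundariesIn k (RAAG Γ) := by
      show IsTwoCoboundary _
      refine isTwoCoboundary_of_symm Γ k _ ?_
      intro v w hvw
      rw [hval2, hval2]
      simp only [RAAG.dual_gen]
      set e0 : Γ.edgeSet := ⟨s(v, w), hvw⟩ with he0
      have hne : v ≠ w := hvw.ne
      have hsum : ∀ (x y : V), x ≠ y → (↑e0 : Sym2 V) = s(x, y) →
          ∑ e : Γ.edgeSet, ev e c * ((if x = (p e).1 then (1:k) else 0)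
              * (if y = (p e).2 then (1:k) else 0))
            - ∑ e : Γ.edgeSet, ev e c * ((if y = (p e).1 then (1:k) else 0)
              * (if x = (p e).2 then (1:k) else 0))
          = c.1 (RAAG.gen Γ x) (RAAG.gen Γ y) - c.1 (RAAG.gen Γ y) (RAAG.gen Γ x) := by
        intro x y hxy hxy2
        rw [← Finset.sum_sub_distrib]
        rw [Finset.sum_eq_single e0]
        · rcases Sym2.eq_iff.mp ((hrep e0).symm.trans hxy2) with ⟨ha, hb⟩ | ⟨ha, hb⟩
          · rw [hev, ha, hb]
            simp [hxy, Ne.symm hxy]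
          · rw [hev, ha, hb]
            simp [hxy, Ne.symm hxy]
        · intro e _ hediff
          have hsym : (↑e : Sym2 V) ≠ s(x, y) := by
            rw [← hxy2]
            exact fun hh => hediff (Subtype.ext hh)
          rw [hrep e] at hsym
          have h1 : ¬(x = (p e).1 ∧ y = (p e).2) := by
            rintro ⟨ha, hb⟩
            exact hsym (by rw [← ha, ← hb])
          have h2 : ¬(y = (p e).1 ∧ x = (p e).2) := by
            rintro ⟨ha, hb⟩
            refine hsym ?_
            rw [← ha, ← hb]
            exact Sym2.eq_swap
          rcases not_and_or.mp h1 with hh | hh <;> rcases not_and_or.mp h2 with hh' | hh' <;>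
            simp [hh, hh']
        · intro hmem
          exact absurd (Finset.mem_univ e0) hmem
      have hs := hsum v w hne rfl
      linear_combination -hs
    have hx : (Submodule.Quotient.mk c : H2 k (RAAG Γ))
        = ∑ e : Γ.edgeSet, ev e c •
            cup k (RAAG Γ) (RAAG.dual Γ k (p e).1) (RAAG.dual Γ k (p e).2) := by
      have h1 : (Submodule.Quotient.mk c : H2 k (RAAG Γ))
          = Submodule.Quotient.mk (∑ e : Γ.edgeSet, ev e c •
              cupCocycle (RAAG.dual Γ k (p e).1) (RAAG.dual Γ k (p e).2)) :=
        (Submodule.Quotient.eq _).mpr key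
      rw [h1, ← Submodule.mkQ_apply, map_sum]
      refine Finset.sum_congr rfl fun e _ => ?_
      rw [map_smul, Submodule.mkQ_apply, hcup]
      rfl
    rw [hx]
    exact Submodule.sum_mem _ fun e _ => Submodule.smul_mem _ _
      (Submodule.subset_span ⟨e, rfl⟩)
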